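/- Let W_n be an increasing sequence of Borel subsets of (0,1)×(0,1) with union W, and let M be the set of positive Borel measures m on (0,1)×(0,1) both of whose marginals are bounded by Lebesgue measure. Define α(W) = sup{m(W) : m ∈ M}. Then α(W_n) increases to α(W). -/
import Mathlib


open MeasureTheory Set
open scoped ENNReal

noncomputable section

/-- The set of positive Borel measures on the plane, supported in the unit
square (in the sense that both marginals are bounded by Lebesgue measure
restricted to `(0,1)`). -/
def Mset : Set (Measure (ℝ × ℝ)) :=
  {m | m.map Prod.fst ≤ volume.restrict (Ioo (0:ℝ) 1) ∧
       m.map Prod.snd ≤ volume.restrict (Ioo (0:ℝ) 1)}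

/-- `α(W) = sup { m(W) : m ∈ M }`. -/
def alpha (W : Set (ℝ × ℝ)) : ℝ≥0∞ := ⨆ m ∈ Mset, m W

theorem stmt0 (W : ℕ → Set (ℝ × ℝ)) (hmono : Monotone W)
    (hmeas : ∀ n, MeasurableSet (W n))
    (hsub : ∀ n, W n ⊆ Ioo (0:ℝ) 1 ×ˢ Ioo (0:ℝ) 1) :
    Monotone (fun n => alpha (W n)) ∧
    Filter.Tendsto (fun n => alpha (W n)) Filter.atTop
      (nhds (alpha (⋃ n, W n))) := by
  have hmono' : Monotone (fun n => alpha (W n)) := by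
    intro a b hab
    exact iSup₂_mono fun m _ => measure_mono (hmono hab)
  refine ⟨hmono', ?_⟩
  have key : alpha (⋃ n, W n) = ⨆ n, alpha (W n) := by
    unfold alpha
    rw [iSup_comm (ι := ℕ)]
    refine iSup_congr fun m => ?_
    rw [iSup_comm (ι := ℕ)]
    refine iSup_congr fun _ => ?_
    exact Directed.measure_iUnion (hmono.directed_le)
  rw [key]
  exact tendsto_atTop_iSup hmono'
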